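/- arXiv:2310.01895 — 3 statements merged into one kernel-verified Lean document; each statement's English description precedes it below -/
import Mathlib

section
/- Suppose the backward Riccati recursion Eₖ = AₖᵀE_{k+1}Aₖ + Qₖ − AₖᵀE_{k+1}Bₖ(Rₖ + BₖᵀE_{k+1}Bₖ)⁻¹BₖᵀE_{k+1}Aₖ holds with terminal condition E_K = Q_K, where each Qₖ is symmetric positive semidefinite and each Rₖ is symmetric positive definite. Then Eₖ is symmetric positive semidefinite for every k = 0,…,K, and in particular Yₖ = Rₖ + BₖᵀE_{k+1}Bₖ is positive definite at every step so the recursion is well defined. -/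
open Matrix

lemma riccati_step {n m : ℕ}
    (A : Matrix (Fin n) (Fin n) ℝ) (B : Matrix (Fin n) (Fin m) ℝ)
    (Q : Matrix (Fin n) (Fin n) ℝ) (R : Matrix (Fin m) (Fin m) ℝ)
    (E1 : Matrix (Fin n) (Fin n) ℝ)
    (hQ : Q.PosSemidef) (hR : R.PosDef) (hE1 : E1.PosSemidef) :
    (R + Bᵀ * E1 * B).PosDef ∧
    (Aᵀ * E1 * A + Q - Aᵀ * E1 * B * (R + Bᵀ * E1 * B)⁻¹ *
      (Bᵀ * E1 * A)).PosSemidef := by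
  have hBt : Bᴴ = Bᵀ := conjTranspose_eq_transpose_of_trivial B
  have hBEB : (Bᵀ * E1 * B).PosSemidef := by
    have := hE1.conjTranspose_mul_mul_same B
    rwa [hBt] at this
  have hY : (R + Bᵀ * E1 * B).PosDef := hR.add_posSemidef hBEB
  refine ⟨hY, ?_⟩
  set Y := R + Bᵀ * E1 * B with hYdef
  set F := Y⁻¹ * (Bᵀ * E1 * A) with hFdef
  have hdet : IsUnit Y.det := hY.det_pos.ne'.isUnit
  have hYF : Y * F = Bᵀ * E1 * A := by
    rw [hFdef, ← Matrix.mul_assoc, Matrix.mul_nonsing_inv _ hdet, Matrix.one_mul]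
  have key : Aᵀ * E1 * A + Q - Aᵀ * E1 * B * Y⁻¹ * (Bᵀ * E1 * A) =
      (A - B * F)ᵀ * E1 * (A - B * F) + Fᵀ * R * F + Q := by
    have h1 : Fᵀ * (R * F) + Fᵀ * (Bᵀ * (E1 * (B * F))) = Fᵀ * (Bᵀ * (E1 * A)) := by
      have : Fᵀ * (Y * F) = Fᵀ * (Bᵀ * E1 * A) := by rw [hYF]
      rw [hYdef] at this
      simpa [Matrix.add_mul, Matrix.mul_add, Matrix.mul_assoc] using this
    have h2 : Aᵀ * E1 * B * Y⁻¹ * (Bᵀ * E1 * A) = Aᵀ * (E1 * (B * F)) := by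
      rw [hFdef]
      simp [Matrix.mul_assoc]
    rw [h2]
    simp only [Matrix.transpose_sub, Matrix.transpose_mul, Matrix.sub_mul,
      Matrix.mul_sub, Matrix.mul_assoc]
    rw [← h1]
    abel
  rw [key]
  have hT1 : ((A - B * F)ᵀ * E1 * (A - B * F)).PosSemidef := by
    have := hE1.conjTranspose_mul_mul_same (A - B * F)
    rwa [conjTranspose_eq_transpose_of_trivial] at this
  have hT2 : (Fᵀ * R * F).PosSemidef := by
    have := hR.posSemidef.conjTranspose_mul_mul_same F
    rwa [conjTranspose_eq_transpose_of_trivial] at this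
  exact (hT1.add hT2).add hQ

theorem riccati_posSemidef {n m K : ℕ}
    (A : ℕ → Matrix (Fin n) (Fin n) ℝ) (B : ℕ → Matrix (Fin n) (Fin m) ℝ)
    (Q : ℕ → Matrix (Fin n) (Fin n) ℝ) (R : ℕ → Matrix (Fin m) (Fin m) ℝ)
    (E : ℕ → Matrix (Fin n) (Fin n) ℝ)
    (hQ : ∀ k ≤ K, (Q k).PosSemidef)
    (hR : ∀ k < K, (R k).PosDef)
    (hEK : E K = Q K)
    (hric : ∀ k < K, E k = (A k)ᵀ * E (k+1) * A k + Q k -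
      (A k)ᵀ * E (k+1) * B k * (R k + (B k)ᵀ * E (k+1) * B k)⁻¹ *
        ((B k)ᵀ * E (k+1) * A k)) :
    (∀ k ≤ K, (E k).PosSemidef) ∧
      (∀ k < K, (R k + (B k)ᵀ * E (k+1) * B k).PosDef) := by
  have key : ∀ d k, k + d = K → (E k).PosSemidef := by
    intro d
    induction d with
    | zero => intro k hk; simp only [Nat.add_zero] at hk; subst hk
              rw [hEK]; exact hQ _ le_rfl
    | succ d ih =>
      intro k hk
      have hkK : k < K := by omega
      have hE1 : (E (k+1)).PosSemidef := ih (k+1) (by omega)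
      have := riccati_step (A k) (B k) (Q k) (R k) (E (k+1))
        (hQ k hkK.le) (hR k hkK) hE1
      rw [hric k hkK]
      exact this.2
  have hE : ∀ k ≤ K, (E k).PosSemidef := fun k hk => key (K - k) k (by omega)
  refine ⟨hE, fun k hk => ?_⟩
  exact (riccati_step (A k) (B k) (Q k) (R k) (E (k+1))
    (hQ k hk.le) (hR k hk) (hE (k+1) hk)).1
end

section
/- Equivalence of control representations: suppose λ_{k+1} = E_{k+1}x_{k+1} + e_{k+1}, the state satisfies x_{k+1} = Aₖxₖ + Bᵢuᵢ + η where η ∈ ℝⁿ, Y = Rᵢ + BᵢᵀE_{k+1}Bᵢ is invertible, Rᵢ is invertible, and b := Y⁻¹(Bᵢᵀ(E_{k+1}η + e_{k+1}) − Nᵢᵀμ). Then uᵢ = −Rᵢ⁻¹(Bᵢᵀλ_{k+1} − Nᵢᵀμ) holds if and only if uᵢ = −Y⁻¹BᵢᵀE_{k+1}Aₖxₖ − b. -/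
open Matrix

lemma inv_mulVec_iff_aux {m : ℕ} (M : Matrix (Fin m) (Fin m) ℝ) (h : IsUnit M.det)
    (u v : Fin m → ℝ) : u = M⁻¹ *ᵥ v ↔ M *ᵥ u = v := by
  constructor
  · rintro rfl
    rw [mulVec_mulVec, Matrix.mul_nonsing_inv _ h, one_mulVec]
  · intro h'
    rw [← h', mulVec_mulVec, Matrix.nonsing_inv_mul _ h, one_mulVec]

theorem control_representation_equivalence {n mi ci : ℕ}
    (A E : Matrix (Fin n) (Fin n) ℝ) (Bi : Matrix (Fin n) (Fin mi) ℝ)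
    (Ri : Matrix (Fin mi) (Fin mi) ℝ) (Ni : Matrix (Fin ci) (Fin mi) ℝ)
    (x x1 η e1 lam1 : Fin n → ℝ) (μ : Fin ci → ℝ) (ui : Fin mi → ℝ)
    (hRi : IsUnit Ri.det)
    (Y : Matrix (Fin mi) (Fin mi) ℝ) (hYdef : Y = Ri + Biᵀ * E * Bi)
    (hY : IsUnit Y.det)
    (hlam : lam1 = E *ᵥ x1 + e1)
    (hx : x1 = A *ᵥ x + Bi *ᵥ ui + η)
    (b : Fin mi → ℝ)
    (hb : b = Y⁻¹ *ᵥ (Biᵀ *ᵥ (E *ᵥ η + e1) - Niᵀ *ᵥ μ)) :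
    ui = -(Ri⁻¹ *ᵥ (Biᵀ *ᵥ lam1 - Niᵀ *ᵥ μ)) ↔
      ui = -((Y⁻¹ * Biᵀ * E * A) *ᵥ x) - b := by
  have hL : (ui = -(Ri⁻¹ *ᵥ (Biᵀ *ᵥ lam1 - Niᵀ *ᵥ μ))) ↔
      Ri *ᵥ ui = -(Biᵀ *ᵥ lam1 - Niᵀ *ᵥ μ) := by
    rw [← mulVec_neg, inv_mulVec_iff_aux Ri hRi]
  have hassoc : Y⁻¹ * Biᵀ * E * A = Y⁻¹ * (Biᵀ * E * A) := by
    rw [Matrix.mul_assoc, Matrix.mul_assoc, Matrix.mul_assoc]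
  have hR : (ui = -((Y⁻¹ * Biᵀ * E * A) *ᵥ x) - b) ↔
      Y *ᵥ ui = -((Biᵀ * E * A) *ᵥ x) - (Biᵀ *ᵥ (E *ᵥ η + e1) - Niᵀ *ᵥ μ) := by
    rw [hb, hassoc, ← mulVec_mulVec, ← mulVec_neg, ← mulVec_sub,
      inv_mulVec_iff_aux Y hY]
  rw [hL, hR, hlam, hx, hYdef]
  simp only [mulVec_add, add_mulVec, mulVec_mulVec, Matrix.mul_assoc, mulVec_neg,
    neg_add, sub_eq_add_neg]
  constructor
  · intro h
    rw [h]; abel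
  · intro h
    have h' := eq_sub_of_add_eq h
    rw [h']; abel
end

section
/- One-step value-function identity (core of Theorem 1): let V(x) = ½xᵀEx + eᵀx + f and V⁺(x) = ½xᵀE⁺x + (e⁺)ᵀx + f⁺ with E, E⁺ symmetric, and let x⁺ = Ax + Bu + η. Assume Y := R + BᵀE⁺B is symmetric positive definite, and the recursions: E = AᵀE⁺A + Q − AᵀE⁺B Y⁻¹ BᵀE⁺A; Yb = Bᵀ(E⁺η + e⁺) − Nᵀμ; e = Aᵀe⁺ + AᵀE⁺η − AᵀE⁺Bb + p − Mᵀμ; f = f⁺ + ½ηᵀ(E⁺η + 2e⁺) + ½s − ½bᵀYb − μᵀ(α + r). Then V⁺(x⁺) − V(x) = −½(xᵀQx + 2pᵀx + uᵀRu + s) + ½(u + y)ᵀY(u + y) + μᵀ(Mx + Nu + α + r), where y = Y⁻¹BᵀE⁺Ax + b. -/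
open Matrix

lemma dpt {a b : ℕ} (M : Matrix (Fin a) (Fin b) ℝ) (v : Fin a → ℝ) (w : Fin b → ℝ) :
    v ⬝ᵥ (M *ᵥ w) = (Mᵀ *ᵥ v) ⬝ᵥ w := by
  rw [Matrix.dotProduct_mulVec, Matrix.mulVec_transpose]

lemma dpt' {a b : ℕ} (M : Matrix (Fin a) (Fin b) ℝ) (v : Fin b → ℝ) (w : Fin a → ℝ) :
    v ⬝ᵥ (Mᵀ *ᵥ w) = (M *ᵥ v) ⬝ᵥ w := by
  rw [dpt, transpose_transpose]

lemma dpt'' {a b : ℕ} (M : Matrix (Fin a) (Fin b) ℝ) (v : Fin b → ℝ) (w : Fin a → ℝ) :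
    (Mᵀ *ᵥ w) ⬝ᵥ v = w ⬝ᵥ (M *ᵥ v) := by
  rw [dotProduct_comm, dpt', dotProduct_comm]

lemma dps {a : ℕ} {M : Matrix (Fin a) (Fin a) ℝ} (h : M.IsSymm) (v w : Fin a → ℝ) :
    v ⬝ᵥ (M *ᵥ w) = w ⬝ᵥ (M *ᵥ v) := by
  rw [dpt, h.eq, dotProduct_comm]

theorem one_step_value_identity {n m c : ℕ}
    (A Q E Ep : Matrix (Fin n) (Fin n) ℝ)
    (B : Matrix (Fin n) (Fin m) ℝ) (R : Matrix (Fin m) (Fin m) ℝ)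
    (M : Matrix (Fin c) (Fin n) ℝ) (N : Matrix (Fin c) (Fin m) ℝ)
    (x x1 η e ep p : Fin n → ℝ) (u b y : Fin m → ℝ)
    (μ α r : Fin c → ℝ) (f fp s : ℝ)
    (hQ : Q.IsSymm) (hE : E.IsSymm) (hEp : Ep.IsSymm) (hR : R.IsSymm)
    (Y : Matrix (Fin m) (Fin m) ℝ) (hYdef : Y = R + Bᵀ * Ep * B)
    (hY : Y.PosDef)
    (hric : E = Aᵀ * Ep * A + Q - Aᵀ * Ep * B * Y⁻¹ * (Bᵀ * Ep * A))
    (hb : Y *ᵥ b = Bᵀ *ᵥ (Ep *ᵥ η + ep) - Nᵀ *ᵥ μ)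
    (he : e = Aᵀ *ᵥ ep + Aᵀ *ᵥ (Ep *ᵥ η) - Aᵀ *ᵥ (Ep *ᵥ (B *ᵥ b)) + p - Mᵀ *ᵥ μ)
    (hf : f = fp + (1/2 : ℝ) * (η ⬝ᵥ (Ep *ᵥ η + (2 : ℝ) • ep)) + (1/2 : ℝ) * s -
      (1/2 : ℝ) * (b ⬝ᵥ (Y *ᵥ b)) - μ ⬝ᵥ (α + r))
    (hx1 : x1 = A *ᵥ x + B *ᵥ u + η)
    (hy : y = (Y⁻¹ * Bᵀ * Ep * A) *ᵥ x + b) :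
    ((1/2 : ℝ) * (x1 ⬝ᵥ (Ep *ᵥ x1)) + ep ⬝ᵥ x1 + fp) -
      ((1/2 : ℝ) * (x ⬝ᵥ (E *ᵥ x)) + e ⬝ᵥ x + f) =
    -(1/2 : ℝ) * (x ⬝ᵥ (Q *ᵥ x) + 2 * (p ⬝ᵥ x) + u ⬝ᵥ (R *ᵥ u) + s) +
      (1/2 : ℝ) * ((u + y) ⬝ᵥ (Y *ᵥ (u + y))) +
      μ ⬝ᵥ (M *ᵥ x + N *ᵥ u + α + r) := by
  have hdet : IsUnit Y.det := isUnit_iff_ne_zero.mpr (ne_of_gt hY.det_pos)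
  have hYs : Yᵀ = Y := by
    rw [hYdef]; simp [transpose_add, transpose_mul, hR.eq, hEp.eq, Matrix.mul_assoc]
  have hYis : (Y⁻¹)ᵀ = Y⁻¹ := by rw [Matrix.transpose_nonsing_inv, hYs]
  have hcanc : ∀ z : Fin m → ℝ, Y *ᵥ (Y⁻¹ *ᵥ z) = z := by
    intro z; rw [Matrix.mulVec_mulVec, Matrix.mul_nonsing_inv _ hdet, Matrix.one_mulVec]
  have hinvflip : ∀ z z' : Fin m → ℝ, (Y⁻¹ *ᵥ z) ⬝ᵥ z' = z ⬝ᵥ (Y⁻¹ *ᵥ z') := by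
    intro z z'; rw [← hYis, dpt', hYis]
  have hYflip : ∀ z z' : Fin m → ℝ, z ⬝ᵥ (Y *ᵥ z') = z' ⬝ᵥ (Y *ᵥ z) :=
    dps (Matrix.IsSymm.ext fun i j => congrFun (congrFun hYs i) j)
  have hcanc' : ∀ z : Fin m → ℝ, Y⁻¹ *ᵥ (Y *ᵥ z) = z := by
    intro z; rw [Matrix.mulVec_mulVec, Matrix.nonsing_inv_mul _ hdet, Matrix.one_mulVec]
  have hEpflip : ∀ (z z' : Fin n → ℝ), (Ep *ᵥ z) ⬝ᵥ z' = z ⬝ᵥ (Ep *ᵥ z') := by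
    intro z z'; rw [← hEp.eq, dpt', hEp.eq]
  subst hric he hf hx1 hy
  simp only [← Matrix.mulVec_mulVec, Matrix.add_mulVec, Matrix.sub_mulVec,
    Matrix.mulVec_add, Matrix.mulVec_sub, dotProduct_add, add_dotProduct,
    dotProduct_sub, sub_dotProduct, dotProduct_smul, smul_dotProduct,
    hcanc, dpt', smul_eq_mul, hinvflip, hb, hcanc', dpt'', hEpflip]
  have hkb : A *ᵥ x ⬝ᵥ Ep *ᵥ B *ᵥ Y⁻¹ *ᵥ Bᵀ *ᵥ Ep *ᵥ η + A *ᵥ x ⬝ᵥ Ep *ᵥ B *ᵥ Y⁻¹ *ᵥ Bᵀ *ᵥ ep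
      - A *ᵥ x ⬝ᵥ Ep *ᵥ B *ᵥ Y⁻¹ *ᵥ Nᵀ *ᵥ μ = B *ᵥ b ⬝ᵥ Ep *ᵥ A *ᵥ x := by
    have h1 : Y⁻¹ *ᵥ (Bᵀ *ᵥ (Ep *ᵥ η + ep) - Nᵀ *ᵥ μ) = b := by rw [← hb, hcanc']
    have h2 : A *ᵥ x ⬝ᵥ Ep *ᵥ B *ᵥ (Y⁻¹ *ᵥ (Bᵀ *ᵥ (Ep *ᵥ η + ep) - Nᵀ *ᵥ μ))
        = B *ᵥ b ⬝ᵥ Ep *ᵥ A *ᵥ x := by rw [h1, dps hEp]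
    rw [← h2]
    simp only [Matrix.mulVec_add, Matrix.mulVec_sub, dotProduct_add, dotProduct_sub]
  have hYu : u ⬝ᵥ Y *ᵥ u = u ⬝ᵥ R *ᵥ u + B *ᵥ u ⬝ᵥ Ep *ᵥ B *ᵥ u := by
    rw [hYdef]
    simp only [Matrix.add_mulVec, ← Matrix.mulVec_mulVec, dotProduct_add, dpt']
  have hbu : b ⬝ᵥ Y *ᵥ u = η ⬝ᵥ Ep *ᵥ B *ᵥ u + ep ⬝ᵥ B *ᵥ u - N *ᵥ u ⬝ᵥ μ := by
    rw [hYflip, hb]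
    simp only [Matrix.mulVec_add, dotProduct_add, dotProduct_sub, dpt']
    rw [dps hEp (B *ᵥ u) η, dotProduct_comm (B *ᵥ u) ep]
  linarith [dps hEp (B *ᵥ u) (A *ᵥ x), dps hEp η (A *ᵥ x), dps hEp η (B *ᵥ u),
    dotProduct_comm ep (B *ᵥ u), dotProduct_comm η ep, dotProduct_comm μ (N *ᵥ u),
    dotProduct_comm μ (N *ᵥ b), hkb, hYu, hbu]
end
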